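/- D'Ocagne's identity for bicomplex k-Fibonacci quaternions: Q_{k,n}·Q_{k,m+1} − Q_{k,n+1}·Q_{k,m} = (−1)^m·F_{k,n−m}·(2(k²+2)·j + (k³+2k)·ij) for all n ≥ m ≥ 0. -/
import Mathlib


open TensorProduct

noncomputable def kFib (k : ℝ) : ℕ → ℝ
  | 0 => 0
  | 1 => 1
  | n + 2 => k * kFib k (n + 1) + kFib k n

abbrev Bicomplex : Type := ℂ ⊗[ℝ] ℂ

noncomputable def bi : Bicomplex := (Complex.I : ℂ) ⊗ₜ[ℝ] (1 : ℂ)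
noncomputable def bj : Bicomplex := (1 : ℂ) ⊗ₜ[ℝ] (Complex.I : ℂ)

noncomputable def Q (k : ℝ) (n : ℕ) : Bicomplex :=
  algebraMap ℝ Bicomplex (kFib k n) + kFib k (n + 1) • bi
    + kFib k (n + 2) • bj + kFib k (n + 3) • (bi * bj)

theorem hbi : bi * bi = -1 := by
  simp only [bi, Algebra.TensorProduct.tmul_mul_tmul, Complex.I_mul_I, mul_one,
    Algebra.TensorProduct.one_def, neg_tmul]

theorem hbj : bj * bj = -1 := by
  simp only [bj, Algebra.TensorProduct.tmul_mul_tmul, Complex.I_mul_I, mul_one, one_mul,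
    Algebra.TensorProduct.one_def, tmul_neg]

noncomputable abbrev φ : ℝ →+* Bicomplex := algebraMap ℝ Bicomplex

theorem sm (r : ℝ) (x : Bicomplex) : r • x = φ r * x := Algebra.smul_def r x

theorem qq_mul (a b c d a' b' c' d' : ℝ) :
    (φ a + b • bi + c • bj + d • (bi * bj)) * (φ a' + b' • bi + c' • bj + d' • (bi * bj)) =
      φ (a*a' - b*b' - c*c' + d*d') + (a*b' + b*a' - c*d' - d*c') • bi
        + (a*c' + c*a' - b*d' - d*b') • bj + (a*d' + d*a' + b*c' + c*b') • (bi * bj) := by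
  simp only [sm, map_mul, map_add, map_sub]
  linear_combination (φ b * φ b' + (φ b * φ d' + φ d * φ b') * bj + φ d * φ d' * (bj*bj)) * hbi
    + ((φ c * φ c' - φ d * φ d') + (φ c * φ d' + φ d * φ c') * bi) * hbj

/-- The right-hand constant. -/
noncomputable def Cc (k : ℝ) : Bicomplex :=
  (2 * (k ^ 2 + 2)) • bj + (k ^ 3 + 2 * k) • (bi * bj)

theorem Qrec (k : ℝ) (n : ℕ) : Q k (n + 2) = φ k * Q k (n + 1) + Q k n := by
  have h2 : kFib k (n+2) = k * kFib k (n+1) + kFib k n := rfl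
  have h3 : kFib k (n+3) = k * kFib k (n+2) + kFib k (n+1) := rfl
  have h4 : kFib k (n+4) = k * kFib k (n+3) + kFib k (n+2) := rfl
  have h5 : kFib k (n+5) = k * kFib k (n+4) + kFib k (n+3) := rfl
  simp only [Q]
  rw [show n+2+1 = n+3 from rfl, show n+2+2 = n+4 from rfl, show n+2+3 = n+5 from rfl,
    show n+1+1 = n+2 from rfl, show n+1+2 = n+3 from rfl, show n+1+3 = n+4 from rfl,
    h5, h4, h3, h2]
  simp only [sm, map_add, map_mul]
  ring

theorem Lshift (k : ℝ) (n m : ℕ) :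
    Q k (n+1) * Q k (m+2) - Q k (n+2) * Q k (m+1) =
      -(Q k n * Q k (m+1) - Q k (n+1) * Q k m) := by
  rw [Qrec k n, Qrec k m]
  ring

theorem f2 (k : ℝ) : kFib k 2 = k := by simp [kFib]
theorem f3 (k : ℝ) : kFib k 3 = k^2 + 1 := by simp [kFib]; ring
theorem f4 (k : ℝ) : kFib k 4 = k^3 + 2*k := by
  show k * kFib k 3 + kFib k 2 = _
  rw [f3, f2]; ring
theorem f5 (k : ℝ) : kFib k 5 = k^4 + 3*k^2 + 1 := by
  show k * kFib k 4 + kFib k 3 = _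
  rw [f4, f3]; ring

theorem Q0 (k : ℝ) : Q k 0 = φ 0 + (1:ℝ) • bi + k • bj + (k^2+1) • (bi * bj) := by
  simp only [Q, show (0:ℕ)+1 = 1 from rfl, show (0:ℕ)+2 = 2 from rfl,
    show (0:ℕ)+3 = 3 from rfl, show kFib k 0 = 0 from rfl, show kFib k 1 = 1 from rfl, f2, f3]

theorem Q1 (k : ℝ) : Q k 1 = φ 1 + k • bi + (k^2+1) • bj + (k^3+2*k) • (bi * bj) := by
  simp only [Q, show (1:ℕ)+1 = 2 from rfl, show (1:ℕ)+2 = 3 from rfl,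
    show (1:ℕ)+3 = 4 from rfl, show kFib k 1 = 1 from rfl, f2, f3, f4]

theorem Q2 (k : ℝ) : Q k 2 = φ k + (k^2+1) • bi + (k^3+2*k) • bj + (k^4+3*k^2+1) • (bi * bj) := by
  simp only [Q, show (2:ℕ)+1 = 3 from rfl, show (2:ℕ)+2 = 4 from rfl,
    show (2:ℕ)+3 = 5 from rfl, f2, f3, f4, f5]

theorem base1 (k : ℝ) : Q k 1 * Q k 1 - Q k 2 * Q k 0 = Cc k := by
  rw [Q0, Q1, Q2, qq_mul, qq_mul, Cc]
  simp only [sm, map_add, map_sub, map_mul, map_pow, map_one, map_zero, map_ofNat]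
  ring

theorem base (k : ℝ) : ∀ d : ℕ, Q k d * Q k 1 - Q k (d+1) * Q k 0 = φ (kFib k d) * Cc k := by
  intro d
  induction d using Nat.twoStepInduction with
  | zero =>
    rw [show (0:ℕ)+1 = 1 from rfl, show kFib k 0 = (0:ℝ) from rfl, map_zero, zero_mul,
      mul_comm, sub_self]
  | one =>
    rw [show (1:ℕ)+1 = 2 from rfl, show kFib k 1 = (1:ℝ) from rfl, map_one, one_mul]
    exact base1 k
  | more d ih1 ih2 =>
    rw [show d+1+1 = d+2 from rfl, Qrec k d] at ih2
    rw [show d+2+1 = d+1+2 from rfl, Qrec k (d+1), Qrec k d,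
      show kFib k (d+2) = k * kFib k (d+1) + kFib k d from rfl, map_add, map_mul]
    linear_combination φ k * ih2 + ih1

theorem stmt16 (k : ℝ) (hk : 0 < k) (n m : ℕ) (hmn : m ≤ n) :
    Q k n * Q k (m + 1) - Q k (n + 1) * Q k m =
      ((-1 : ℝ) ^ m * kFib k (n - m)) •
        ((2 * (k ^ 2 + 2)) • bj + (k ^ 3 + 2 * k) • (bi * bj)) := by
  have key : ∀ m n : ℕ, m ≤ n → Q k n * Q k (m + 1) - Q k (n + 1) * Q k m =
      ((-1 : ℝ) ^ m * kFib k (n - m)) • Cc k := by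
    intro m
    induction m with
    | zero =>
      intro n _
      rw [Nat.sub_zero, pow_zero, one_mul, sm]
      exact base k n
    | succ m ih =>
      intro n hmn
      obtain ⟨n', rfl⟩ : ∃ n', n = n' + 1 := ⟨n - 1, by omega⟩
      rw [show m+1+1 = m+2 from rfl, show n'+1+1 = n'+2 from rfl, Lshift,
        ih n' (by omega), Nat.succ_sub_succ]
      rw [← neg_smul]
      congr 1
      ring
  exact key m n hmn
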